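/- Let G = (V, E, w) be a signed weighted graph with Laplacian L and signed weighted edge expansion φ_G. If φ_G ≥ 0, then L is positive semidefinite. -/

import Mathlib

open Matrix Finset

/-- positive part of a weight matrix -/
def Wplus {n : ℕ} (W : Matrix (Fin n) (Fin n) ℝ) : Matrix (Fin n) (Fin n) ℝ :=
  fun i j => max (W i j) 0

/-- negative part of a weight matrix -/
def Wminus {n : ℕ} (W : Matrix (Fin n) (Fin n) ℝ) : Matrix (Fin n) (Fin n) ℝ :=
  fun i j => min (W i j) 0

/-- degree of a vertex -/
def deg {n : ℕ} (W : Matrix (Fin n) (Fin n) ℝ) (i : Fin n) : ℝ :=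
  ∑ j ∈ univ.filter (· ≠ i), W i j

/-- positive degree of a vertex -/
def degPlus {n : ℕ} (W : Matrix (Fin n) (Fin n) ℝ) (i : Fin n) : ℝ :=
  ∑ j ∈ univ.filter (· ≠ i), Wplus W i j

/-- positive degree of a set -/
def degPlusSet {n : ℕ} (W : Matrix (Fin n) (Fin n) ℝ) (S : Finset (Fin n)) : ℝ :=
  ∑ i ∈ S, degPlus W i

/-- positive boundary weight of a set -/
def wPlusBoundary {n : ℕ} (W : Matrix (Fin n) (Fin n) ℝ) (S : Finset (Fin n)) : ℝ :=
  ∑ i ∈ S, ∑ j ∈ Sᶜ, Wplus W i j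

/-- negative boundary weight of a set -/
def wMinusBoundary {n : ℕ} (W : Matrix (Fin n) (Fin n) ℝ) (S : Finset (Fin n)) : ℝ :=
  ∑ i ∈ S, ∑ j ∈ Sᶜ, Wminus W i j

/-- minimum positive degree -/
noncomputable def degPlusMin {n : ℕ} (W : Matrix (Fin n) (Fin n) ℝ) : ℝ :=
  sInf {x | ∃ i : Fin n, x = degPlus W i}

/-- signed weighted edge expansion of the graph with weight matrix `W` -/
noncomputable def phiG {n : ℕ} (W : Matrix (Fin n) (Fin n) ℝ) : ℝ :=
  (1/2) * degPlusMin W *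
    sInf {x | ∃ S : Finset (Fin n), S.Nonempty ∧ S ≠ univ ∧
      degPlusSet W S ≤ degPlusSet W univ / 2 ∧
      x = (wPlusBoundary W S / degPlusSet W S)^2}
  + 2 * sInf {x | ∃ S : Finset (Fin n), S.Nonempty ∧ S ≠ univ ∧ x = wMinusBoundary W S}

variable {n : ℕ}

lemma core_sweep (w : Matrix (Fin n) (Fin n) ℝ) (hw : ∀ i j, 0 ≤ w i j)
    (hws : ∀ i j, w i j = w j i) (a : ℝ) (ha : 0 ≤ a)
    (g : Fin n → ℝ) (hg : ∀ i, 0 ≤ g i)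
    (hcut : ∀ S : Finset (Fin n), S.Nonempty → S ⊆ univ.filter (fun i => g i ≠ 0) →
      a * (∑ i ∈ S, ∑ j ∈ univ.filter (· ≠ i), w i j) ≤ ∑ i ∈ S, ∑ j ∈ Sᶜ, w i j) :
    2 * a * (∑ i, (∑ j ∈ univ.filter (· ≠ i), w i j) * g i) ≤ ∑ i, ∑ j, w i j * |g i - g j| := by
  suffices H : ∀ N : ℕ, ∀ g : Fin n → ℝ, (univ.filter (fun i => g i ≠ 0)).card ≤ N →
      (∀ i, 0 ≤ g i) →
      (∀ S : Finset (Fin n), S.Nonempty → S ⊆ univ.filter (fun i => g i ≠ 0) →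
        a * (∑ i ∈ S, ∑ j ∈ univ.filter (· ≠ i), w i j) ≤ ∑ i ∈ S, ∑ j ∈ Sᶜ, w i j) →
      2 * a * (∑ i, (∑ j ∈ univ.filter (· ≠ i), w i j) * g i) ≤ ∑ i, ∑ j, w i j * |g i - g j| by
    exact H _ g le_rfl hg hcut
  intro N
  induction N with
  | zero =>
    intro g hcard hg hcut
    have hz : ∀ i, g i = 0 := by
      intro i
      by_contra h
      have : i ∈ univ.filter (fun i => g i ≠ 0) := by simp [h]
      have := card_pos.mpr ⟨i, this⟩
      omega
    simp [hz]
  | succ N ih =>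
    intro g hcard hg hcut
    by_cases hS : (univ.filter (fun i => g i ≠ 0)).Nonempty
    · set S := univ.filter (fun i => g i ≠ 0) with hSdef
      obtain ⟨i₁, hi₁S, hmin⟩ := S.exists_min_image g hS
      set t := g i₁ with htdef
      have ht : 0 < t := by
        have : g i₁ ≠ 0 := (mem_filter.mp hi₁S).2
        exact lt_of_le_of_ne (hg i₁) (Ne.symm this)
      set g' : Fin n → ℝ := fun i => if i ∈ S then g i - t else 0 with hg'def
      have hg'nn : ∀ i, 0 ≤ g' i := by
        intro i
        simp only [hg'def]
        split
        · next h => linarith [hmin i h]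
        · exact le_rfl
      have hgoff : ∀ i, i ∉ S → g i = 0 := by
        intro i hi
        by_contra h
        exact hi (by simp [hSdef, h])
      have hsub : univ.filter (fun i => g' i ≠ 0) ⊆ S.erase i₁ := by
        intro i hi
        simp only [mem_filter, hg'def] at hi
        rcases hi with ⟨-, hi⟩
        by_cases hiS : i ∈ S
        · refine mem_erase.mpr ⟨?_, hiS⟩
          rintro rfl
          simp [hiS, htdef] at hi
        · simp [hiS] at hi
      have hcard' : (univ.filter (fun i => g' i ≠ 0)).card ≤ N := by
        have h1 := card_le_card hsub
        have h2 := card_erase_of_mem hi₁S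
        have h3 : 1 ≤ S.card := card_pos.mpr ⟨i₁, hi₁S⟩
        omega
      have hcut' : ∀ T : Finset (Fin n), T.Nonempty →
          T ⊆ univ.filter (fun i => g' i ≠ 0) →
          a * (∑ i ∈ T, ∑ j ∈ univ.filter (· ≠ i), w i j) ≤ ∑ i ∈ T, ∑ j ∈ Tᶜ, w i j := by
        intro T hT hTsub
        exact hcut T hT (hTsub.trans (hsub.trans (erase_subset _ _)))
      have IH := ih g' hcard' hg'nn hcut'
      -- pointwise decomposition of g
      have hgpt : ∀ i, g i = g' i + (if i ∈ S then t else 0) := by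
        intro i
        simp only [hg'def]
        by_cases hi : i ∈ S
        · simp [hi]
        · simp [hi, hgoff i hi]
      -- LHS identity
      have hLHS : (∑ i, (∑ j ∈ univ.filter (· ≠ i), w i j) * g i)
          = (∑ i, (∑ j ∈ univ.filter (· ≠ i), w i j) * g' i)
            + t * ∑ i ∈ S, ∑ j ∈ univ.filter (· ≠ i), w i j := by
        calc (∑ i, (∑ j ∈ univ.filter (· ≠ i), w i j) * g i)
            = ∑ i, ((∑ j ∈ univ.filter (· ≠ i), w i j) * g' i
              + (if i ∈ S then (∑ j ∈ univ.filter (· ≠ i), w i j) * t else 0)) := by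
              refine Finset.sum_congr rfl fun i _ => ?_
              rw [hgpt i]
              by_cases hi : i ∈ S <;> simp [hi] <;> ring
          _ = _ := by
              rw [Finset.sum_add_distrib, Finset.sum_ite_mem]
              congr 1
              rw [Finset.mul_sum, univ_inter]
              exact Finset.sum_congr rfl fun i _ => by ring
      -- RHS blocks
      have hg'off : ∀ i, i ∉ S → g' i = 0 := by
        intro i hi; simp [hg'def, hi]
      have habs : ∀ i j, |g i - g j| = |g' i - g' j|
          + (if (i ∈ S) = (j ∈ S) then 0 else t) := by
        intro i j
        by_cases hi : i ∈ S <;> by_cases hj : j ∈ S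
        · simp only [hgpt i, hgpt j, hi, hj, if_pos, if_true]
          simp
        · rw [hgpt i, hgoff j hj, hg'off j hj, if_pos hi, if_neg (by simp [hi, hj])]
          rw [sub_zero, sub_zero, abs_of_nonneg (by linarith [hg'nn i]),
            abs_of_nonneg (hg'nn i)]
        · rw [hgpt j, hgoff i hi, hg'off i hi, if_pos hj, if_neg (by simp [hi, hj])]
          rw [zero_sub, zero_sub, abs_neg, abs_neg, abs_of_nonneg (by linarith [hg'nn j]),
            abs_of_nonneg (hg'nn j)]
        · rw [hgoff i hi, hgoff j hj, hg'off i hi, hg'off j hj, if_pos (by simp [hi, hj])]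
          simp
      have hBB : ∑ i ∈ Sᶜ, ∑ j ∈ S, w i j = ∑ i ∈ S, ∑ j ∈ Sᶜ, w i j := by
        refine Finset.sum_comm.trans ?_
        exact Finset.sum_congr rfl fun i _ => Finset.sum_congr rfl fun j _ => hws _ _
      have hinner1 : ∀ i ∈ S, (∑ j, w i j * (if (i ∈ S) = (j ∈ S) then 0 else t))
          = t * ∑ j ∈ Sᶜ, w i j := by
        intro i hi
        rw [← Finset.sum_add_sum_compl S (fun j => w i j * (if (i ∈ S) = (j ∈ S) then 0 else t))]
        have e1 : ∑ j ∈ S, w i j * (if (i ∈ S) = (j ∈ S) then 0 else t) = 0 := by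
          refine Finset.sum_eq_zero fun j hj => ?_
          rw [if_pos (by simp [hi, hj])]; ring
        have e2 : ∑ j ∈ Sᶜ, w i j * (if (i ∈ S) = (j ∈ S) then 0 else t)
            = t * ∑ j ∈ Sᶜ, w i j := by
          rw [Finset.mul_sum]
          refine Finset.sum_congr rfl fun j hj => ?_
          rw [if_neg (by simp [hi, Finset.mem_compl.mp hj])]; ring
        rw [e1, e2, zero_add]
      have hinner2 : ∀ i ∈ Sᶜ, (∑ j, w i j * (if (i ∈ S) = (j ∈ S) then 0 else t))
          = t * ∑ j ∈ S, w i j := by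
        intro i hi
        replace hi := Finset.mem_compl.mp hi
        rw [← Finset.sum_add_sum_compl S (fun j => w i j * (if (i ∈ S) = (j ∈ S) then 0 else t))]
        have e1 : ∑ j ∈ S, w i j * (if (i ∈ S) = (j ∈ S) then 0 else t)
            = t * ∑ j ∈ S, w i j := by
          rw [Finset.mul_sum]
          refine Finset.sum_congr rfl fun j hj => ?_
          rw [if_neg (by simp [hi, hj])]; ring
        have e2 : ∑ j ∈ Sᶜ, w i j * (if (i ∈ S) = (j ∈ S) then 0 else t) = 0 := by
          refine Finset.sum_eq_zero fun j hj => ?_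
          rw [if_pos (by simp [hi, Finset.mem_compl.mp hj])]; ring
        rw [e1, e2, add_zero]
      have hRHS : ∑ i, ∑ j, w i j * |g i - g j|
          = (∑ i, ∑ j, w i j * |g' i - g' j|) + 2 * t * ∑ i ∈ S, ∑ j ∈ Sᶜ, w i j := by
        have step : ∀ i, ∑ j, w i j * |g i - g j|
            = (∑ j, w i j * |g' i - g' j|)
              + ∑ j, w i j * (if (i ∈ S) = (j ∈ S) then 0 else t) := by
          intro i
          rw [← Finset.sum_add_distrib]
          refine Finset.sum_congr rfl fun j _ => ?_
          rw [habs i j]; ring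
        calc ∑ i, ∑ j, w i j * |g i - g j|
            = (∑ i, ∑ j, w i j * |g' i - g' j|)
              + ∑ i, ∑ j, w i j * (if (i ∈ S) = (j ∈ S) then 0 else t) := by
              rw [← Finset.sum_add_distrib]
              exact Finset.sum_congr rfl fun i _ => step i
          _ = _ := by
              congr 1
              rw [← Finset.sum_add_sum_compl S
                (fun i => ∑ j, w i j * (if (i ∈ S) = (j ∈ S) then 0 else t)),
                Finset.sum_congr rfl hinner1, Finset.sum_congr rfl hinner2,
                ← Finset.mul_sum, ← Finset.mul_sum, hBB]
              ring
      have hc := hcut S hS (by rw [hSdef])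
      have hd : 0 ≤ ∑ i ∈ S, ∑ j ∈ univ.filter (· ≠ i), w i j := by
        refine Finset.sum_nonneg fun i _ => Finset.sum_nonneg fun j _ => hw i j
      calc 2 * a * ∑ i, (∑ j ∈ univ.filter (· ≠ i), w i j) * g i
          = 2 * a * ∑ i, (∑ j ∈ univ.filter (· ≠ i), w i j) * g' i
            + 2 * t * (a * ∑ i ∈ S, ∑ j ∈ univ.filter (· ≠ i), w i j) := by
            rw [hLHS]; ring
        _ ≤ (∑ i, ∑ j, w i j * |g' i - g' j|) + 2 * t * ∑ i ∈ S, ∑ j ∈ Sᶜ, w i j := by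
            have := mul_le_mul_of_nonneg_left hc (by linarith : (0:ℝ) ≤ 2 * t)
            linarith [IH]
        _ = ∑ i, ∑ j, w i j * |g i - g j| := hRHS.symm
    · have hz : ∀ i, g i = 0 := by
        intro i
        by_contra h
        exact hS ⟨i, by simp [h]⟩
      simp [hz]

lemma key_ineq (w : Matrix (Fin n) (Fin n) ℝ) (hw : ∀ i j, 0 ≤ w i j)
    (hws : ∀ i j, w i j = w j i) (hw0 : ∀ i, w i i = 0) (a : ℝ) (ha : 0 ≤ a)
    (f : Fin n → ℝ) (hf : ∀ i, 0 ≤ f i)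
    (hcut : ∀ S : Finset (Fin n), S.Nonempty → S ⊆ univ.filter (fun i => f i ≠ 0) →
      a * (∑ i ∈ S, ∑ j ∈ univ.filter (· ≠ i), w i j) ≤ ∑ i ∈ S, ∑ j ∈ Sᶜ, w i j) :
    a ^ 2 * (∑ i, (∑ j ∈ univ.filter (· ≠ i), w i j) * (f i) ^ 2)
      ≤ ∑ i, ∑ j, w i j * (f i - f j) ^ 2 := by
  set d : Fin n → ℝ := fun i => ∑ j ∈ univ.filter (· ≠ i), w i j with hd
  have hdnn : ∀ i, 0 ≤ d i := fun i =>
    Finset.sum_nonneg fun j _ => hw i j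
  set M : ℝ := ∑ i, d i * (f i) ^ 2 with hM
  set P : ℝ := ∑ i, ∑ j, w i j * (f i - f j) ^ 2 with hP
  set Z : ℝ := ∑ i, ∑ j, w i j * (f i + f j) ^ 2 with hZ
  set T : ℝ := ∑ i, ∑ j, w i j * |(f i) ^ 2 - (f j) ^ 2| with hT
  have hMnn : 0 ≤ M := Finset.sum_nonneg fun i _ =>
    mul_nonneg (hdnn i) (sq_nonneg _)
  have hPnn : 0 ≤ P := Finset.sum_nonneg fun i _ =>
    Finset.sum_nonneg fun j _ => mul_nonneg (hw i j) (sq_nonneg _)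
  -- row sums
  have hrow : ∀ i, ∑ j, w i j = d i := by
    intro i
    rw [← Finset.sum_filter_add_sum_filter_not univ (· ≠ i) (fun j => w i j)]
    have : univ.filter (fun j => ¬ j ≠ i) = {i} := by
      ext j; simp
    rw [this]
    simp [hw0 i, hd]
  have hcol : ∀ j, ∑ i, w i j = d j := by
    intro j
    rw [show (∑ i, w i j) = ∑ i, w j i from Finset.sum_congr rfl fun i _ => hws i j]
    exact hrow j
  -- coarea via core_sweep
  have hTcore : 2 * a * M ≤ T := by
    have hfilter : (univ.filter (fun i => (f i) ^ 2 ≠ 0)) = univ.filter (fun i => f i ≠ 0) := by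
      ext i; simp [pow_eq_zero_iff]
    have := core_sweep w hw hws a ha (fun i => (f i) ^ 2) (fun i => sq_nonneg _)
      (by rw [hfilter]; exact hcut)
    simpa [hM] using this
  -- Cauchy-Schwarz
  have hCS : T ^ 2 ≤ P * Z := by
    have := Finset.sum_mul_sq_le_sq_mul_sq (univ : Finset (Fin n × Fin n))
      (fun p => Real.sqrt (w p.1 p.2) * |f p.1 - f p.2|)
      (fun p => Real.sqrt (w p.1 p.2) * (f p.1 + f p.2))
    have e1 : ∑ p : Fin n × Fin n,
        (Real.sqrt (w p.1 p.2) * |f p.1 - f p.2|) * (Real.sqrt (w p.1 p.2) * (f p.1 + f p.2))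
        = T := by
      rw [hT, Fintype.sum_prod_type]
      refine Finset.sum_congr rfl fun i _ => Finset.sum_congr rfl fun j _ => ?_
      have : |(f i) ^ 2 - (f j) ^ 2| = |f i - f j| * (f i + f j) := by
        rw [show (f i) ^ 2 - (f j) ^ 2 = (f i - f j) * (f i + f j) by ring, abs_mul,
          abs_of_nonneg (add_nonneg (hf i) (hf j))]
      rw [this]
      rw [show (Real.sqrt (w i j) * |f i - f j|) * (Real.sqrt (w i j) * (f i + f j))
        = (Real.sqrt (w i j) * Real.sqrt (w i j)) * (|f i - f j| * (f i + f j)) by ring,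
        Real.mul_self_sqrt (hw i j)]
    have e2 : ∑ p : Fin n × Fin n, (Real.sqrt (w p.1 p.2) * |f p.1 - f p.2|) ^ 2 = P := by
      rw [hP, Fintype.sum_prod_type]
      refine Finset.sum_congr rfl fun i _ => Finset.sum_congr rfl fun j _ => ?_
      rw [mul_pow, sq_abs, Real.sq_sqrt (hw i j)]
    have e3 : ∑ p : Fin n × Fin n, (Real.sqrt (w p.1 p.2) * (f p.1 + f p.2)) ^ 2 = Z := by
      rw [hZ, Fintype.sum_prod_type]
      refine Finset.sum_congr rfl fun i _ => Finset.sum_congr rfl fun j _ => ?_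
      rw [mul_pow, Real.sq_sqrt (hw i j)]
    rw [e1, e2, e3] at this
    exact this
  -- Z ≤ 4 M
  have hZM : Z ≤ 4 * M := by
    have step1 : Z ≤ ∑ i, ∑ j, w i j * (2 * (f i) ^ 2 + 2 * (f j) ^ 2) := by
      refine Finset.sum_le_sum fun i _ => Finset.sum_le_sum fun j _ => ?_
      exact mul_le_mul_of_nonneg_left (by nlinarith [sq_nonneg (f i - f j)]) (hw i j)
    have step2 : ∑ i, ∑ j, w i j * (2 * (f i) ^ 2 + 2 * (f j) ^ 2) = 4 * M := by
      have e : ∀ i j, w i j * (2 * (f i) ^ 2 + 2 * (f j) ^ 2)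
          = 2 * ((f i) ^ 2 * w i j) + 2 * ((f j) ^ 2 * w i j) := fun i j => by ring
      have hA : ∑ i, ∑ j, 2 * ((f i) ^ 2 * w i j) = 2 * M := by
        have e2 : ∀ i, ∑ j, 2 * ((f i) ^ 2 * w i j) = 2 * (d i * (f i) ^ 2) := by
          intro i
          rw [← Finset.mul_sum, ← Finset.mul_sum, hrow]; ring
        rw [Finset.sum_congr rfl (fun i _ => e2 i), ← Finset.mul_sum]
      have hB : ∑ i, ∑ j, 2 * ((f j) ^ 2 * w i j) = 2 * M := by
        rw [Finset.sum_comm]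
        have e2 : ∀ j, ∑ i, 2 * ((f j) ^ 2 * w i j) = 2 * (d j * (f j) ^ 2) := by
          intro j
          rw [← Finset.mul_sum, ← Finset.mul_sum, hcol]; ring
        rw [Finset.sum_congr rfl (fun j _ => e2 j), ← Finset.mul_sum]
      simp_rw [e, Finset.sum_add_distrib]
      rw [hA, hB]
      ring
    linarith
  -- combine
  rcases eq_or_lt_of_le hMnn with hM0 | hM0
  · have hz : a ^ 2 * M = 0 := by rw [← hM0]; ring
    linarith
  · have h1 : (2 * a * M) ^ 2 ≤ T ^ 2 := by
      have h2aM : 0 ≤ 2 * a * M := by positivity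
      exact pow_le_pow_left₀ h2aM hTcore 2
    have h2 : P * Z ≤ P * (4 * M) := mul_le_mul_of_nonneg_left hZM hPnn
    have h3 : 4 * (a ^ 2 * M) * M ≤ 4 * P * M := by nlinarith
    have := (mul_le_mul_iff_of_pos_right hM0).mp (by linarith : (a ^ 2 * M) * M ≤ P * M)
    linarith

lemma weighted_median (hn : 0 < n) (x : Fin n → ℝ) (d : Fin n → ℝ) (hd : ∀ i, 0 ≤ d i) :
    ∃ m : Fin n,
      (∑ i ∈ univ.filter (fun i => x m < x i), d i) ≤ (∑ i, d i) / 2 ∧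
      (∑ i ∈ univ.filter (fun i => x i < x m), d i) ≤ (∑ i, d i) / 2 := by
  set D : ℝ := ∑ i, d i with hD
  have hDnn : 0 ≤ D := Finset.sum_nonneg fun i _ => hd i
  set F : Finset (Fin n) :=
    univ.filter (fun m => (∑ i ∈ univ.filter (fun i => x m < x i), d i) ≤ D / 2) with hF
  have hFne : F.Nonempty := by
    obtain ⟨m₀, -, hmax⟩ := (univ : Finset (Fin n)).exists_max_image x
      (univ_nonempty_iff.mpr (Fin.pos_iff_nonempty.mp hn))
    refine ⟨m₀, mem_filter.mpr ⟨mem_univ _, ?_⟩⟩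
    have : univ.filter (fun i => x m₀ < x i) = ∅ := by
      ext i
      simp only [mem_filter, mem_univ, true_and, notMem_empty, iff_false, not_lt]
      exact hmax i (mem_univ i)
    rw [this]
    simp
    linarith
  obtain ⟨m, hmF, hmin⟩ := F.exists_min_image x hFne
  refine ⟨m, (mem_filter.mp hmF).2, ?_⟩
  by_contra hcon
  push_neg at hcon
  set T : Finset (Fin n) := univ.filter (fun i => x i < x m) with hTdef
  have hTne : T.Nonempty := by
    by_contra hne
    rw [Finset.not_nonempty_iff_eq_empty] at hne
    rw [hne] at hcon
    simp at hcon
    linarith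
  obtain ⟨m', hm'T, hmax'⟩ := T.exists_max_image x hTne
  have hm'lt : x m' < x m := (mem_filter.mp hm'T).2
  have hTc : univ.filter (fun i => x m' < x i) = Tᶜ := by
    ext i
    simp only [mem_filter, mem_univ, true_and, mem_compl, hTdef, not_lt]
    constructor
    · intro h
      by_contra hlt
      push_neg at hlt
      exact absurd (hmax' i (mem_filter.mpr ⟨mem_univ _, hlt⟩)) (not_le.mpr h)
    · intro h
      exact lt_of_lt_of_le hm'lt h
  have hsplit : ∑ i ∈ T, d i + ∑ i ∈ Tᶜ, d i = D := Finset.sum_add_sum_compl T d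
  have hm'F : m' ∈ F := by
    refine mem_filter.mpr ⟨mem_univ _, ?_⟩
    rw [hTc]
    have : ∑ i ∈ T, d i = ∑ i ∈ univ.filter (fun i => x i < x m), d i := rfl
    linarith
  exact absurd (hmin m' hm'F) (not_le.mpr hm'lt)

lemma quad_form {n : ℕ} (W : Matrix (Fin n) (Fin n) ℝ) (hsW : ∀ i j, W i j = W j i)
    (hdiag : ∀ i, W i i = 0) (x : Fin n → ℝ) :
    2 * (x ⬝ᵥ (Matrix.diagonal (deg W) - W) *ᵥ x) = ∑ i, ∑ j, W i j * (x i - x j) ^ 2 := by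
  have hrow : ∀ i, ∑ j, W i j = deg W i := by
    intro i
    rw [← Finset.sum_filter_add_sum_filter_not univ (· ≠ i) (fun j => W i j)]
    have : univ.filter (fun j => ¬ j ≠ i) = {i} := by ext j; simp
    rw [this]
    simp [hdiag i, deg]
  have hcol : ∀ j, ∑ i, W i j = deg W j := by
    intro j
    rw [show (∑ i, W i j) = ∑ i, W j i from Finset.sum_congr rfl fun i _ => (hsW i j).symm ▸ rfl]
    exact hrow j
  have expand : x ⬝ᵥ (Matrix.diagonal (deg W) - W) *ᵥ x
      = (∑ i, deg W i * x i ^ 2) - ∑ i, ∑ j, W i j * x i * x j := by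
    have inner : ∀ i, (∑ j, ((if i = j then deg W i else 0) - W i j) * x j)
        = deg W i * x i - ∑ j, W i j * x j := by
      intro i
      simp_rw [sub_mul]
      rw [Finset.sum_sub_distrib]
      congr 1
      simp [ite_mul]
    simp only [dotProduct, Matrix.mulVec, Matrix.sub_apply, Matrix.diagonal_apply]
    calc ∑ i, x i * ∑ j, ((if i = j then deg W i else 0) - W i j) * x j
        = ∑ i, (deg W i * x i ^ 2 - x i * ∑ j, W i j * x j) := by
          refine Finset.sum_congr rfl fun i _ => ?_
          rw [inner i]; ring
      _ = (∑ i, deg W i * x i ^ 2) - ∑ i, ∑ j, W i j * x i * x j := by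
          rw [Finset.sum_sub_distrib]
          congr 1
          refine Finset.sum_congr rfl fun i _ => ?_
          rw [Finset.mul_sum]
          exact Finset.sum_congr rfl fun j _ => by ring
  have hRHS : ∑ i, ∑ j, W i j * (x i - x j) ^ 2
      = 2 * (∑ i, deg W i * x i ^ 2) - 2 * ∑ i, ∑ j, W i j * x i * x j := by
    have e : ∀ i j, W i j * (x i - x j) ^ 2
        = W i j * x i ^ 2 + W i j * x j ^ 2 - 2 * (W i j * x i * x j) := fun i j => by ring
    simp_rw [e, Finset.sum_sub_distrib, Finset.sum_add_distrib]
    have hA : ∑ i, ∑ j, W i j * x i ^ 2 = ∑ i, deg W i * x i ^ 2 := by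
      refine Finset.sum_congr rfl fun i _ => ?_
      rw [← Finset.sum_mul, hrow]
    have hB : ∑ i, ∑ j, W i j * x j ^ 2 = ∑ i, deg W i * x i ^ 2 := by
      rw [Finset.sum_comm]
      refine Finset.sum_congr rfl fun j _ => ?_
      rw [← Finset.sum_mul, hcol]
    rw [hA, hB]
    simp_rw [← Finset.mul_sum]
    ring
  rw [expand, hRHS]
  ring


theorem nonneg_edge_expansion_implies_psd
    (n : ℕ) (hn : 0 < n) (W : Matrix (Fin n) (Fin n) ℝ)
    (hsymm : W.IsSymm) (hdiag : ∀ i, W i i = 0)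
    (hphi : 0 ≤ phiG W) :
    (Matrix.diagonal (deg W) - W).PosSemidef := by
  classical
  have hW : ∀ i j, W i j = W j i := fun i j => hsymm.apply j i
  -- basic facts about the positive and negative parts
  have hWp_nn : ∀ i j, 0 ≤ Wplus W i j := fun i j => le_max_right _ _
  have hWp_symm : ∀ i j, Wplus W i j = Wplus W j i := fun i j => by
    simp [Wplus, hW i j]
  have hWp_diag : ∀ i, Wplus W i i = 0 := fun i => by simp [Wplus, hdiag i]
  have hWm_np : ∀ i j, Wminus W i j ≤ 0 := fun i j => min_le_right _ _
  have hWm_symm : ∀ i j, Wminus W i j = Wminus W j i := fun i j => by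
    simp [Wminus, hW i j]
  have hWm_diag : ∀ i, Wminus W i i = 0 := fun i => by simp [Wminus, hdiag i]
  have hWsplit : ∀ i j, W i j = Wplus W i j + Wminus W i j := fun i j => by
    rcases le_total (W i j) 0 with h | h
    · simp [Wplus, Wminus, max_eq_right h, min_eq_left h]
    · simp [Wplus, Wminus, max_eq_left h, min_eq_right h]
  have hdp_nn : ∀ i, 0 ≤ degPlus W i := fun i =>
    Finset.sum_nonneg fun j _ => hWp_nn i j
  -- the two sInf quantities
  set α : ℝ := sInf {x | ∃ S : Finset (Fin n), S.Nonempty ∧ S ≠ univ ∧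
      degPlusSet W S ≤ degPlusSet W univ / 2 ∧
      x = (wPlusBoundary W S / degPlusSet W S)^2} with hαdef
  set β : ℝ := sInf {x | ∃ S : Finset (Fin n), S.Nonempty ∧ S ≠ univ ∧
      x = wMinusBoundary W S} with hβdef
  have hαnn : 0 ≤ α := by
    apply Real.sInf_nonneg
    rintro z ⟨S, -, -, -, rfl⟩
    positivity
  have hdmin_le : ∀ i, degPlusMin W ≤ degPlus W i := by
    intro i
    apply csInf_le
    · have : {x | ∃ i : Fin n, x = degPlus W i} = Set.range (degPlus W) := by
        ext z; simp [eq_comm, Set.range]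
      rw [this]
      exact (Set.finite_range _).bddBelow
    · exact ⟨i, rfl⟩
  -- β is at most each "negative degree"
  have hβ_le : ∀ i, β ≤ ∑ j ∈ univ.filter (· ≠ i), Wminus W i j := by
    intro i
    by_cases huniv : ({i} : Finset (Fin n)) = univ
    · have hfe : univ.filter (· ≠ i) = (∅ : Finset (Fin n)) := by
        ext j
        have hj : j ∈ ({i} : Finset (Fin n)) := huniv ▸ mem_univ j
        simp only [mem_singleton] at hj
        simp [hj]
      have hempty : {x | ∃ S : Finset (Fin n), S.Nonempty ∧ S ≠ univ ∧
          x = wMinusBoundary W S} = (∅ : Set ℝ) := by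
        ext z
        simp only [Set.mem_setOf_eq, Set.mem_empty_iff_false, iff_false, not_exists]
        rintro S ⟨hne, hSu, -⟩
        apply hSu
        apply Finset.eq_univ_of_card
        have h1 : S ⊆ {i} := huniv ▸ S.subset_univ
        have hcard1 : S.card = 1 := le_antisymm
          (by simpa using Finset.card_le_card h1) (Finset.card_pos.mpr hne)
        have hc : Fintype.card (Fin n) = 1 := by
          rw [← Finset.card_univ, ← huniv, Finset.card_singleton]
        rw [hcard1, hc]
      rw [hβdef, hempty, Real.sInf_empty, hfe]
      simp
    · have hmem : wMinusBoundary W {i} ∈ {x | ∃ S : Finset (Fin n), S.Nonempty ∧ S ≠ univ ∧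
          x = wMinusBoundary W S} := ⟨{i}, singleton_nonempty i, huniv, rfl⟩
      have hbdd : BddBelow {x | ∃ S : Finset (Fin n), S.Nonempty ∧ S ≠ univ ∧
          x = wMinusBoundary W S} := by
        have : {x | ∃ S : Finset (Fin n), S.Nonempty ∧ S ≠ univ ∧ x = wMinusBoundary W S}
            ⊆ Set.range (wMinusBoundary W) := by
          rintro z ⟨S, -, -, rfl⟩; exact ⟨S, rfl⟩
        exact ((Set.finite_range _).subset this).bddBelow
      have h1 : β ≤ wMinusBoundary W {i} := csInf_le hbdd hmem
      have h2 : wMinusBoundary W {i} = ∑ j ∈ univ.filter (· ≠ i), Wminus W i j := by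
        rw [wMinusBoundary, Finset.sum_singleton]
        apply Finset.sum_congr _ (fun _ _ => rfl)
        ext j; simp [eq_comm]
      rw [← h2]; exact h1
  -- rewrite hphi
  rw [phiG, ← hαdef, ← hβdef] at hphi
  have hphi2 : 0 ≤ α * degPlusMin W + 4 * β := by linarith
  rw [Matrix.posSemidef_iff_dotProduct_mulVec]
  constructor
  · rw [Matrix.IsHermitian, Matrix.conjTranspose_eq_transpose_of_trivial,
      Matrix.transpose_sub, Matrix.diagonal_transpose, hsymm.eq]
  intro y
  rw [star_trivial]
  -- the key positive-part bound for nonnegative vectors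
  have hkey : ∀ f : Fin n → ℝ, (∀ i, 0 ≤ f i) →
      (∀ S : Finset (Fin n), S.Nonempty → S ⊆ univ.filter (fun i => f i ≠ 0) →
        S ≠ univ ∧ degPlusSet W S ≤ degPlusSet W univ / 2) →
      α * ∑ i, degPlus W i * (f i) ^ 2 ≤ ∑ i, ∑ j, Wplus W i j * (f i - f j) ^ 2 := by
    intro f hf hSprop
    have hcut : ∀ S : Finset (Fin n), S.Nonempty → S ⊆ univ.filter (fun i => f i ≠ 0) →
        Real.sqrt α * (∑ i ∈ S, ∑ j ∈ univ.filter (· ≠ i), Wplus W i j)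
          ≤ ∑ i ∈ S, ∑ j ∈ Sᶜ, Wplus W i j := by
      intro S hne hsub
      obtain ⟨hSu, hhalf⟩ := hSprop S hne hsub
      have hdLHS : (∑ i ∈ S, ∑ j ∈ univ.filter (· ≠ i), Wplus W i j) = degPlusSet W S := rfl
      have hbLHS : (∑ i ∈ S, ∑ j ∈ Sᶜ, Wplus W i j) = wPlusBoundary W S := rfl
      rw [hdLHS, hbLHS]
      have hds : 0 ≤ degPlusSet W S := Finset.sum_nonneg fun i _ => hdp_nn i
      have hwb : 0 ≤ wPlusBoundary W S := Finset.sum_nonneg fun i _ =>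
        Finset.sum_nonneg fun j _ => hWp_nn i j
      have hmem : (wPlusBoundary W S / degPlusSet W S) ^ 2 ∈
          {x | ∃ S : Finset (Fin n), S.Nonempty ∧ S ≠ univ ∧
            degPlusSet W S ≤ degPlusSet W univ / 2 ∧
            x = (wPlusBoundary W S / degPlusSet W S)^2} := ⟨S, hne, hSu, hhalf, rfl⟩
      have hbdd : BddBelow {x | ∃ S : Finset (Fin n), S.Nonempty ∧ S ≠ univ ∧
          degPlusSet W S ≤ degPlusSet W univ / 2 ∧
          x = (wPlusBoundary W S / degPlusSet W S)^2} := by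
        have : {x | ∃ S : Finset (Fin n), S.Nonempty ∧ S ≠ univ ∧
            degPlusSet W S ≤ degPlusSet W univ / 2 ∧
            x = (wPlusBoundary W S / degPlusSet W S)^2}
            ⊆ Set.range (fun S => (wPlusBoundary W S / degPlusSet W S)^2) := by
          rintro z ⟨S, -, -, -, rfl⟩; exact ⟨S, rfl⟩
        exact ((Set.finite_range _).subset this).bddBelow
      have hα_le : α ≤ (wPlusBoundary W S / degPlusSet W S) ^ 2 := csInf_le hbdd hmem
      rcases eq_or_lt_of_le hds with hds0 | hds0
      · rw [← hds0, mul_zero]; exact hwb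
      · have h1 : Real.sqrt α ≤ |wPlusBoundary W S / degPlusSet W S| := by
          rw [← Real.sqrt_sq_eq_abs]
          exact Real.sqrt_le_sqrt hα_le
        rw [abs_of_nonneg (div_nonneg hwb hds)] at h1
        calc Real.sqrt α * degPlusSet W S
            ≤ (wPlusBoundary W S / degPlusSet W S) * degPlusSet W S :=
              mul_le_mul_of_nonneg_right h1 hds
          _ = wPlusBoundary W S := by field_simp
    have := key_ineq (Wplus W) hWp_nn hWp_symm hWp_diag (Real.sqrt α) (Real.sqrt_nonneg α)
      f hf hcut
    rw [Real.sq_sqrt hαnn] at this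
    calc α * ∑ i, degPlus W i * (f i) ^ 2
        = α * ∑ i, (∑ j ∈ univ.filter (· ≠ i), Wplus W i j) * (f i) ^ 2 := rfl
      _ ≤ _ := this
  -- median split
  obtain ⟨m, hm1, hm2⟩ := weighted_median hn y (degPlus W) hdp_nn
  set c : ℝ := y m with hcdef
  set p : Fin n → ℝ := fun i => max (y i - c) 0 with hpdef
  set q : Fin n → ℝ := fun i => max (c - y i) 0 with hqdef
  have hp_nn : ∀ i, 0 ≤ p i := fun i => le_max_right _ _
  have hq_nn : ∀ i, 0 ≤ q i := fun i => le_max_right _ _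
  have hpq : ∀ i, p i - q i = y i - c := by
    intro i
    rcases le_total (y i) c with h | h
    · rw [hpdef, hqdef]
      simp only []
      rw [max_eq_right (by linarith), max_eq_left (by linarith)]
      ring
    · rw [hpdef, hqdef]
      simp only []
      rw [max_eq_left (by linarith), max_eq_right (by linarith)]
      ring
  have hpqmul : ∀ i, p i * q i = 0 := by
    intro i
    rcases le_total (y i) c with h | h
    · rw [hpdef]
      simp only []
      rw [max_eq_right (by linarith)]
      ring
    · rw [hqdef]
      simp only []
      rw [max_eq_right (by linarith)]
      ring
  have hppqq : ∀ i, p i ^ 2 + q i ^ 2 = (y i - c) ^ 2 := by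
    intro i
    have h1 := hpq i
    have h2 := hpqmul i
    calc p i ^ 2 + q i ^ 2 = (p i - q i) ^ 2 + 2 * (p i * q i) := by ring
      _ = (y i - c) ^ 2 := by rw [h1, h2]; ring
  -- properties of supports
  have hsupp_p : ∀ S : Finset (Fin n), S.Nonempty → S ⊆ univ.filter (fun i => p i ≠ 0) →
      S ≠ univ ∧ degPlusSet W S ≤ degPlusSet W univ / 2 := by
    intro S hne hsub
    have hpm : p m = 0 := by rw [hpdef]; simp [hcdef]
    have hmem_iff : ∀ i, p i ≠ 0 → y m < y i := by
      intro i hi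
      by_contra hcon
      push_neg at hcon
      apply hi
      rw [hpdef]
      simp only []
      rw [max_eq_right (by rw [hcdef] at *; linarith)]
    constructor
    · intro hSu
      have := hsub (hSu ▸ mem_univ m)
      simp only [mem_filter] at this
      exact this.2 hpm
    · have h1 : S ⊆ univ.filter (fun i => y m < y i) := by
        intro i hi
        have := hsub hi
        simp only [mem_filter] at this ⊢
        exact ⟨mem_univ i, hmem_iff i this.2⟩
      have h2 : degPlusSet W S ≤ ∑ i ∈ univ.filter (fun i => y m < y i), degPlus W i :=
        Finset.sum_le_sum_of_subset_of_nonneg h1 (fun i _ _ => hdp_nn i)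
      have h3 : degPlusSet W univ = ∑ i, degPlus W i := rfl
      rw [h3]
      calc degPlusSet W S ≤ _ := h2
        _ ≤ (∑ i, degPlus W i) / 2 := hm1
  have hsupp_q : ∀ S : Finset (Fin n), S.Nonempty → S ⊆ univ.filter (fun i => q i ≠ 0) →
      S ≠ univ ∧ degPlusSet W S ≤ degPlusSet W univ / 2 := by
    intro S hne hsub
    have hqm : q m = 0 := by rw [hqdef]; simp [hcdef]
    have hmem_iff : ∀ i, q i ≠ 0 → y i < y m := by
      intro i hi
      by_contra hcon
      push_neg at hcon
      apply hi
      rw [hqdef]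
      simp only []
      rw [max_eq_right (by rw [hcdef] at *; linarith)]
    constructor
    · intro hSu
      have := hsub (hSu ▸ mem_univ m)
      simp only [mem_filter] at this
      exact this.2 hqm
    · have h1 : S ⊆ univ.filter (fun i => y i < y m) := by
        intro i hi
        have := hsub hi
        simp only [mem_filter] at this ⊢
        exact ⟨mem_univ i, hmem_iff i this.2⟩
      have h2 : degPlusSet W S ≤ ∑ i ∈ univ.filter (fun i => y i < y m), degPlus W i :=
        Finset.sum_le_sum_of_subset_of_nonneg h1 (fun i _ _ => hdp_nn i)
      have h3 : degPlusSet W univ = ∑ i, degPlus W i := rfl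
      rw [h3]
      calc degPlusSet W S ≤ _ := h2
        _ ≤ (∑ i, degPlus W i) / 2 := hm2
  have hkp := hkey p hp_nn hsupp_p
  have hkq := hkey q hq_nn hsupp_q
  -- positive part bound
  have hpos : α * ∑ i, degPlus W i * ((y i - c) ^ 2)
      ≤ ∑ i, ∑ j, Wplus W i j * (y i - y j) ^ 2 := by
    have hsplit : ∀ i j, Wplus W i j * (p i - p j) ^ 2 + Wplus W i j * (q i - q j) ^ 2
        ≤ Wplus W i j * (y i - y j) ^ 2 := by
      intro i j
      have hyij : y i - y j = (p i - p j) - (q i - q j) := by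
        have h1 := hpq i
        have h2 := hpq j
        linarith
      have hAB : (p i - p j) * (q i - q j) ≤ 0 := by
        have := hpqmul i
        have := hpqmul j
        nlinarith [mul_nonneg (hp_nn i) (hq_nn j), mul_nonneg (hp_nn j) (hq_nn i)]
      rw [hyij]
      nlinarith [hWp_nn i j, mul_nonneg (hWp_nn i j) (neg_nonneg.mpr hAB)]
    have hsum : (∑ i, ∑ j, Wplus W i j * (p i - p j) ^ 2)
        + (∑ i, ∑ j, Wplus W i j * (q i - q j) ^ 2)
        ≤ ∑ i, ∑ j, Wplus W i j * (y i - y j) ^ 2 := by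
      rw [← Finset.sum_add_distrib]
      refine Finset.sum_le_sum fun i _ => ?_
      rw [← Finset.sum_add_distrib]
      exact Finset.sum_le_sum fun j _ => hsplit i j
    have hLHSe : α * ∑ i, degPlus W i * ((y i - c) ^ 2)
        = α * ∑ i, degPlus W i * (p i) ^ 2 + α * ∑ i, degPlus W i * (q i) ^ 2 := by
      rw [← mul_add, ← Finset.sum_add_distrib]
      congr 1
      refine Finset.sum_congr rfl fun i _ => ?_
      rw [← hppqq i]
      ring
    rw [hLHSe]
    linarith
  -- negative part bound
  have hneg : ∑ i, 4 * (β * (y i - c) ^ 2) ≤ ∑ i, ∑ j, Wminus W i j * (y i - y j) ^ 2 := by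
    set dM : Fin n → ℝ := fun i => ∑ j ∈ univ.filter (· ≠ i), Wminus W i j with hdM
    have hrowM : ∀ i, ∑ j, Wminus W i j = dM i := by
      intro i
      rw [← Finset.sum_filter_add_sum_filter_not univ (· ≠ i) (fun j => Wminus W i j)]
      have : univ.filter (fun j => ¬ j ≠ i) = {i} := by ext j; simp
      rw [this]
      simp [hWm_diag i, hdM]
    have hcolM : ∀ j, ∑ i, Wminus W i j = dM j := by
      intro j
      rw [show (∑ i, Wminus W i j) = ∑ i, Wminus W j i from
        Finset.sum_congr rfl fun i _ => hWm_symm i j]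
      exact hrowM j
    have hstepA : ∀ i j, Wminus W i j * (2 * (y i - c) ^ 2 + 2 * (y j - c) ^ 2)
        ≤ Wminus W i j * (y i - y j) ^ 2 := by
      intro i j
      apply mul_le_mul_of_nonpos_left _ (hWm_np i j)
      nlinarith [sq_nonneg ((y i - c) + (y j - c))]
    have hstepB : ∑ i, ∑ j, Wminus W i j * (2 * (y i - c) ^ 2 + 2 * (y j - c) ^ 2)
        = ∑ i, 4 * (dM i * (y i - c) ^ 2) := by
      have e : ∀ i j, Wminus W i j * (2 * (y i - c) ^ 2 + 2 * (y j - c) ^ 2)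
          = 2 * ((y i - c) ^ 2 * Wminus W i j) + 2 * ((y j - c) ^ 2 * Wminus W i j) :=
        fun i j => by ring
      have hA : ∑ i, ∑ j, 2 * ((y i - c) ^ 2 * Wminus W i j) = ∑ i, 2 * (dM i * (y i - c) ^ 2) := by
        refine Finset.sum_congr rfl fun i _ => ?_
        rw [← Finset.mul_sum, ← Finset.mul_sum, hrowM]; ring
      have hB : ∑ i, ∑ j, 2 * ((y j - c) ^ 2 * Wminus W i j) = ∑ j, 2 * (dM j * (y j - c) ^ 2) := by
        rw [Finset.sum_comm]
        refine Finset.sum_congr rfl fun j _ => ?_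
        rw [← Finset.mul_sum, ← Finset.mul_sum, hcolM]; ring
      simp_rw [e, Finset.sum_add_distrib]
      rw [hA, hB, ← Finset.sum_add_distrib]
      exact Finset.sum_congr rfl fun i _ => by ring
    have hsumA : ∑ i, ∑ j, Wminus W i j * (2 * (y i - c) ^ 2 + 2 * (y j - c) ^ 2)
        ≤ ∑ i, ∑ j, Wminus W i j * (y i - y j) ^ 2 :=
      Finset.sum_le_sum fun i _ => Finset.sum_le_sum fun j _ => hstepA i j
    have hβdM : ∑ i, 4 * (β * (y i - c) ^ 2) ≤ ∑ i, 4 * (dM i * (y i - c) ^ 2) := by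
      refine Finset.sum_le_sum fun i _ => ?_
      have := hβ_le i
      nlinarith [sq_nonneg (y i - c)]
    rw [← hstepB] at hβdM
    linarith
  -- combine
  have hquad := quad_form W hW hdiag y
  have hWsum : ∑ i, ∑ j, W i j * (y i - y j) ^ 2
      = (∑ i, ∑ j, Wplus W i j * (y i - y j) ^ 2)
        + ∑ i, ∑ j, Wminus W i j * (y i - y j) ^ 2 := by
    rw [← Finset.sum_add_distrib]
    refine Finset.sum_congr rfl fun i _ => ?_
    rw [← Finset.sum_add_distrib]
    refine Finset.sum_congr rfl fun j _ => ?_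
    rw [hWsplit i j]
    ring
  have hfinal1 : α * degPlusMin W * (∑ i, (y i - c) ^ 2) ≤ α * ∑ i, degPlus W i * ((y i - c) ^ 2) := by
    rw [Finset.mul_sum, Finset.mul_sum]
    refine Finset.sum_le_sum fun i _ => ?_
    have h1 := hdmin_le i
    have h2 := sq_nonneg (y i - c)
    have h3 : degPlusMin W * ((y i - c) ^ 2) ≤ degPlus W i * ((y i - c) ^ 2) :=
      mul_le_mul_of_nonneg_right h1 h2
    have h4 := mul_le_mul_of_nonneg_left h3 hαnn
    calc α * degPlusMin W * ((y i - c) ^ 2) = α * (degPlusMin W * ((y i - c) ^ 2)) := by ring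
      _ ≤ α * (degPlus W i * ((y i - c) ^ 2)) := h4
      _ = α * (degPlus W i * ((y i - c) ^ 2)) := rfl
  have hfinal2 : 4 * β * (∑ i, (y i - c) ^ 2) = ∑ i, 4 * (β * (y i - c) ^ 2) := by
    rw [Finset.mul_sum]
    exact Finset.sum_congr rfl fun i _ => by ring
  have hsq_nn : 0 ≤ ∑ i, (y i - c) ^ 2 := Finset.sum_nonneg fun i _ => sq_nonneg _
  have : 0 ≤ 2 * (y ⬝ᵥ (Matrix.diagonal (deg W) - W) *ᵥ y) := by
    rw [hquad, hWsum]
    have h0 : 0 ≤ (α * degPlusMin W + 4 * β) * (∑ i, (y i - c) ^ 2) :=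
      mul_nonneg hphi2 hsq_nn
    have hexp : (α * degPlusMin W + 4 * β) * (∑ i, (y i - c) ^ 2)
        = α * degPlusMin W * (∑ i, (y i - c) ^ 2)
          + 4 * β * (∑ i, (y i - c) ^ 2) := by ring
    linarith [hpos, hneg, hfinal1, hfinal2]
  linarith
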